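/- Let n ≥ 1 and 1 ≤ k ≤ l. For any m ≥ 1 let R_m be the multivariate polynomial ring over ℂ in the indeterminates y_{ij} with 1 ≤ i ≤ j ≤ m, let Y^{(m)} be the symmetric m×m matrix over R_m with entries Y^{(m)}_{ij} = y_{min(i,j),max(i,j)}, and let 𝓙_m ⊆ R_m be the ideal generated by all (n+1)×(n+1) minors of Y^{(m)} (the zero ideal if n+1 > m). Let ρ : R_k → R_l be the ℂ-algebra embedding sending y_{ij} to y_{ij}. Then the contraction (preimage) of 𝓙_l under ρ equals 𝓙_k. -/

import Mathlib

open MvPolynomial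

set_option synthInstance.maxHeartbeats 1000000
set_option maxHeartbeats 1000000
set_option maxRecDepth 10000

noncomputable section

/-- R_m: polynomial ring over ℂ in the indeterminates y_{ij}, 1 ≤ i ≤ j ≤ m,
indexed by unordered pairs from Fin m. -/
abbrev R (m : ℕ) : Type := MvPolynomial (Sym2 (Fin m)) ℂ

/-- the generic symmetric m×m matrix Y^{(m)} with Y_{ij} = y_{min(i,j),max(i,j)} -/
def Ymat (m : ℕ) : Matrix (Fin m) (Fin m) (R m) := fun i j => X s(i, j)

/-- the ideal 𝓙_m generated by all (n+1)×(n+1) minors of Y^{(m)} -/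
def Jideal (n m : ℕ) : Ideal (R m) :=
  Ideal.span { p : R m | ∃ (f g : Fin (n + 1) → Fin m),
    StrictMono f ∧ StrictMono g ∧ p = ((Ymat m).submatrix f g).det }

/-- the ℂ-algebra embedding ρ : R_k → R_l sending y_{ij} to y_{ij} -/
def ρ (k l : ℕ) (h : k ≤ l) : R k →ₐ[ℂ] R l :=
  MvPolynomial.rename (Sym2.map (Fin.castLE h))

/-- value of the retraction on a variable -/
def Fpair (k l : ℕ) : Sym2 (Fin l) → R k :=
  Sym2.lift ⟨fun i j => if h : (i : ℕ) < k ∧ (j : ℕ) < k then X s(⟨i, h.1⟩, ⟨j, h.2⟩) else 0,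
    by
      intro i j
      by_cases hi : (i : ℕ) < k <;> by_cases hj : (j : ℕ) < k <;>
        simp [hi, hj, Sym2.eq_swap]⟩

/-- the retraction π : R_l → R_k -/
def πmap (k l : ℕ) : R l →ₐ[ℂ] R k := aeval (Fpair k l)

lemma Fpair_mk (k l : ℕ) (a b : Fin l) :
    Fpair k l s(a, b) =
      if h : (a : ℕ) < k ∧ (b : ℕ) < k then X s(⟨a, h.1⟩, ⟨b, h.2⟩) else 0 := rfl

lemma πmap_retract (k l : ℕ) (h : k ≤ l) (p : R k) : πmap k l (ρ k l h p) = p := by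
  have : (πmap k l).comp (ρ k l h) = AlgHom.id ℂ (R k) := by
    apply MvPolynomial.algHom_ext
    intro s
    induction s using Sym2.ind with
    | _ a b =>
      simp only [AlgHom.comp_apply, ρ, rename_X, Sym2.map_pair_eq, πmap, aeval_X,
        AlgHom.id_apply]
      rw [Fpair_mk]
      have ha : ((Fin.castLE h a : Fin l) : ℕ) < k := a.2
      have hb : ((Fin.castLE h b : Fin l) : ℕ) < k := b.2
      rw [dif_pos ⟨ha, hb⟩]
      congr 1
  calc πmap k l (ρ k l h p) = ((πmap k l).comp (ρ k l h)) p := rfl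
    _ = p := by rw [this]; rfl

lemma castLE_strictMono (k l : ℕ) (h : k ≤ l) : StrictMono (Fin.castLE h) := by
  intro a b hab
  exact hab

/-- the contraction of the determinantal ideal 𝓙_l under ρ equals 𝓙_k. -/
theorem determinantal_ideal_contraction (n k l : ℕ) (hn : 1 ≤ n) (hk : 1 ≤ k)
    (hkl : k ≤ l) :
    (Jideal n l).comap (ρ k l hkl) = Jideal n k := by
  apply le_antisymm
  · -- contraction ⊆ Jideal n k, via retraction
    intro p hp
    rw [Ideal.mem_comap] at hp
    have hπ : Jideal n l ≤ (Jideal n k).comap (πmap k l) := by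
      rw [Jideal, Ideal.span_le]
      rintro _ ⟨f, g, hf, hg, rfl⟩
      simp only [SetLike.mem_coe, Ideal.mem_comap]
      have hdet : (πmap k l) ((Ymat l).submatrix f g).det =
          (((Ymat l).submatrix f g).map (πmap k l)).det :=
        (RingHom.map_det (πmap k l).toRingHom _).trans rfl
      rw [hdet]
      by_cases hfk : ∀ i, ((f i : Fin l) : ℕ) < k
      · by_cases hgk : ∀ j, ((g j : Fin l) : ℕ) < k
        · -- all indices small: get a minor of Ymat k
          set f' : Fin (n + 1) → Fin k := fun i => ⟨f i, hfk i⟩ with hf'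
          set g' : Fin (n + 1) → Fin k := fun j => ⟨g j, hgk j⟩ with hg'
          have : ((Ymat l).submatrix f g).map (πmap k l) = (Ymat k).submatrix f' g' := by
            ext i j
            simp only [Matrix.map_apply, Matrix.submatrix_apply, Ymat, πmap, aeval_X]
            rw [Fpair_mk, dif_pos ⟨hfk i, hgk j⟩]
          rw [this]
          exact Ideal.subset_span ⟨f', g',
            fun a b hab => hf hab,
            fun a b hab => hg hab, rfl⟩
        · -- some column index large: that column is zero
          push_neg at hgk
          obtain ⟨j, hj⟩ := hgk
          rw [Matrix.det_eq_zero_of_column_eq_zero j]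
          · exact Ideal.zero_mem _
          · intro i
            simp only [Matrix.map_apply, Matrix.submatrix_apply, Ymat, πmap, aeval_X]
            rw [Fpair_mk, dif_neg (fun hc => absurd hc.2 (LE.le.not_gt hj))]
      · -- some row index large: that row is zero
        push_neg at hfk
        obtain ⟨i, hi⟩ := hfk
        rw [Matrix.det_eq_zero_of_row_eq_zero i]
        · exact Ideal.zero_mem _
        · intro j
          simp only [Matrix.map_apply, Matrix.submatrix_apply, Ymat, πmap, aeval_X]
          rw [Fpair_mk, dif_neg (fun hc => absurd hc.1 (LE.le.not_gt hi))]
    have := hπ hp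
    rw [Ideal.mem_comap, πmap_retract k l hkl p] at this
    exact this
  · -- Jideal n k ⊆ contraction
    rw [Jideal, Ideal.span_le]
    rintro _ ⟨f, g, hf, hg, rfl⟩
    simp only [SetLike.mem_coe, Ideal.mem_comap]
    have hdet : (ρ k l hkl) ((Ymat k).submatrix f g).det =
        (((Ymat k).submatrix f g).map (ρ k l hkl)).det :=
      (RingHom.map_det (ρ k l hkl).toRingHom _).trans rfl
    rw [hdet]
    have : ((Ymat k).submatrix f g).map (ρ k l hkl) =
        (Ymat l).submatrix (Fin.castLE hkl ∘ f) (Fin.castLE hkl ∘ g) := by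
      ext i j
      simp only [Matrix.map_apply, Matrix.submatrix_apply, Ymat, ρ, rename_X,
        Sym2.map_pair_eq, Function.comp_apply]
    rw [this]
    exact Ideal.subset_span ⟨Fin.castLE hkl ∘ f, Fin.castLE hkl ∘ g,
      (castLE_strictMono k l hkl).comp hf, (castLE_strictMono k l hkl).comp hg, rfl⟩
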